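/- arXiv:2505.09080 — 2 statements merged into one kernel-verified Lean document; each statement's English description precedes it below -/
import Mathlib

section
/- Let R be a commutative ring, M an R-module, and D = R ⊕ M with projection p: D → R and inclusion z: R → D. If f: A → D ⊗_R D is an R-linear map that equalizes the three maps id_D ⊗ p, p ⊗ id_D, and (z∘p) ⊗ p from D ⊗_R D to D, then the image of f lies in the submodule R ⊕ (M ⊗_R M) of D ⊗_R D ≅ R ⊕ M ⊕ M ⊕ (M ⊗_R M). -/
open TensorProduct

/-- For `D = R ⊕ M` with projection `p` and inclusion `z`, if
`f : A → D ⊗ D` equalizes `id_D ⊗ p`, `p ⊗ id_D` and `(z∘p) ⊗ p`, then the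
image of `f` lies in the submodule `R ⊕ (M ⊗ M)` of
`D ⊗ D ≅ R ⊕ M ⊕ M ⊕ (M ⊗ M)`, i.e. in the span of `z(1) ⊗ z(1)` together
with the image of `M ⊗ M`. -/
theorem stmt_9 (R : Type*) [CommRing R] (M A : Type*)
    [AddCommGroup M] [Module R M] [AddCommGroup A] [Module R A]
    (f : A →ₗ[R] ((R × M) ⊗[R] (R × M))) :
    let p : (R × M) →ₗ[R] R := LinearMap.fst R R M
    let z : R →ₗ[R] (R × M) := LinearMap.inl R R M
    let P1 : ((R × M) ⊗[R] (R × M)) →ₗ[R] (R × M) :=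
      (TensorProduct.rid R (R × M)).toLinearMap ∘ₗ LinearMap.lTensor (R × M) p
    let P2 : ((R × M) ⊗[R] (R × M)) →ₗ[R] (R × M) :=
      (TensorProduct.lid R (R × M)).toLinearMap ∘ₗ LinearMap.rTensor (R × M) p
    let P3 : ((R × M) ⊗[R] (R × M)) →ₗ[R] (R × M) :=
      (TensorProduct.rid R (R × M)).toLinearMap ∘ₗ TensorProduct.map (z ∘ₗ p) p
    P1 ∘ₗ f = P2 ∘ₗ f → P2 ∘ₗ f = P3 ∘ₗ f →
      ∀ a : A, f a ∈
        Submodule.span R {(z 1) ⊗ₜ[R] (z 1)} ⊔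
          LinearMap.range (TensorProduct.map (LinearMap.inr R R M) (LinearMap.inr R R M)) := by
  intro p z P1 P2 P3 h12 h23 a
  set x : (R × M) ⊗[R] (R × M) := f a with hx
  have h23' : P2 x = P3 x := congrFun (congrArg DFunLike.coe h23) a
  have h13' : P1 x = P3 x := (congrFun (congrArg DFunLike.coe h12) a).trans h23'
  -- the four "projections"
  set e : (R × M) →ₗ[R] (R × M) := z ∘ₗ p with he
  set s : (R × M) →ₗ[R] (R × M) := LinearMap.inr R R M ∘ₗ LinearMap.snd R R M with hs
  have hes : e + s = LinearMap.id := by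
    ext d <;> simp [he, hs, p, z]
  set q11 := TensorProduct.map e e
  set q12 := TensorProduct.map e s
  set q21 := TensorProduct.map s e
  set q22 := TensorProduct.map s s
  have hdecomp : x = q11 x + q12 x + q21 x + q22 x := by
    have : q11 + q12 + q21 + q22 = LinearMap.id := by
      calc q11 + q12 + q21 + q22
          = TensorProduct.map (e + s) (e + s) := by
            simp [q11, q12, q21, q22, TensorProduct.map_add_left,
              TensorProduct.map_add_right]; abel
        _ = LinearMap.id := by rw [hes, TensorProduct.map_id]
    conv_lhs => rw [← LinearMap.id_apply (R := R) x, ← this]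
    simp
  -- ψ d = z 1 ⊗ s d,  ψ' d = s d ⊗ z 1
  have hq12 : q12 = (TensorProduct.mk R (R × M) (R × M) (z 1)).comp s ∘ₗ (P2 - P3) := by
    apply TensorProduct.ext'
    rintro ⟨r₁, m₁⟩ ⟨r₂, m₂⟩
    simp only [q12, P2, P3, he, hs, p, z, TensorProduct.map_tmul, LinearMap.coe_comp,
      Function.comp_apply, LinearMap.fst_apply, LinearMap.inl_apply, LinearMap.inr_apply,
      LinearMap.snd_apply, LinearMap.sub_apply, map_sub, LinearMap.rTensor_tmul,
      LinearEquiv.coe_coe, TensorProduct.lid_tmul, TensorProduct.rid_tmul, map_smul,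
      TensorProduct.mk_apply, Prod.smul_mk, smul_zero, smul_eq_mul, mul_comm r₂ r₁,
      Prod.mk_sub_mk, sub_self, sub_zero, TensorProduct.tmul_sub]
    rw [show ((r₁, (0:M)) : R × M) = r₁ • ((1:R), (0:M)) by
      simp [Prod.smul_mk], TensorProduct.smul_tmul]
    simp [Prod.smul_mk]
  have hq21 : q21 = ((TensorProduct.mk R (R × M) (R × M)).flip (z 1)).comp s ∘ₗ (P1 - P3) := by
    apply TensorProduct.ext'
    rintro ⟨r₁, m₁⟩ ⟨r₂, m₂⟩
    simp only [q21, P1, P3, he, hs, p, z, TensorProduct.map_tmul, LinearMap.coe_comp,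
      Function.comp_apply, LinearMap.fst_apply, LinearMap.inl_apply, LinearMap.inr_apply,
      LinearMap.snd_apply, LinearMap.sub_apply, map_sub, LinearMap.lTensor_tmul,
      LinearEquiv.coe_coe, TensorProduct.lid_tmul, TensorProduct.rid_tmul, map_smul,
      TensorProduct.mk_apply, LinearMap.flip_apply, Prod.smul_mk, smul_zero, smul_eq_mul,
      Prod.mk_sub_mk, sub_self, sub_zero, TensorProduct.tmul_sub]
    rw [show ((r₂, (0:M)) : R × M) = r₂ • ((1:R), (0:M)) by
      simp [Prod.smul_mk], ← TensorProduct.smul_tmul]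
    simp [Prod.smul_mk]
  have h12z : q12 x = 0 := by
    rw [hq12]; simp [h23']
  have h21z : q21 x = 0 := by
    rw [hq21]; simp [h13']
  have h11mem : q11 x ∈ Submodule.span R {(z 1) ⊗ₜ[R] (z 1)} := by
    clear hdecomp
    induction x using TensorProduct.induction_on with
    | zero => simp
    | tmul d e' =>
      refine Submodule.mem_span_singleton.2 ⟨d.1 * e'.1, ?_⟩
      simp only [q11, he, p, z, TensorProduct.map_tmul, LinearMap.coe_comp,
        Function.comp_apply, LinearMap.fst_apply, LinearMap.inl_apply]
      rw [show ((d.1, (0:M)) : R × M) = d.1 • ((1:R), (0:M)) by simp [Prod.smul_mk],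
        show ((e'.1, (0:M)) : R × M) = e'.1 • ((1:R), (0:M)) by simp [Prod.smul_mk],
        TensorProduct.smul_tmul, TensorProduct.tmul_smul, TensorProduct.tmul_smul,
        smul_smul]
    | add u v hu hv => rw [map_add]; exact add_mem hu hv
  have h22mem : q22 x ∈ LinearMap.range (TensorProduct.map (LinearMap.inr R R M) (LinearMap.inr R R M)) := by
    have : q22 = TensorProduct.map (LinearMap.inr R R M) (LinearMap.inr R R M) ∘ₗ
        TensorProduct.map (LinearMap.snd R R M) (LinearMap.snd R R M) := by
      rw [← TensorProduct.map_comp]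
    rw [this]; exact ⟨_, rfl⟩
  rw [hdecomp, h12z, h21z]
  exact add_mem (add_mem (add_mem (Submodule.mem_sup_left h11mem) (zero_mem _)) (zero_mem _))
    (Submodule.mem_sup_right h22mem)
end

section
/- Let R be a commutative ring, M a commutative solid non-unital R-algebra with multiplication α: M ⊗_R M → M an isomorphism with inverse ν. Define l: R ⊕ M → (R ⊕ M) ⊗_R (R ⊕ M) by l(a + x) = a·(1⊗1) + ι(ν(x)), where ι: M ⊗_R M → (R⊕M) ⊗_R (R⊕M) is the canonical inclusion. Then (id ⊗ p) ∘ l = z ∘ p and (p ⊗ id) ∘ l = z ∘ p, where p: R ⊕ M → R is the projection and z: R → R ⊕ M the inclusion. -/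
open TensorProduct

/-- For a commutative solid non-unital `R`-algebra `M` with multiplication `α`
and inverse comultiplication `ν`, the vertical lift
`l : R ⊕ M → (R ⊕ M) ⊗ (R ⊕ M)`, `l(a + x) = a·(1 ⊗ 1) + ι(ν x)`, satisfies
`(id ⊗ p) ∘ l = z ∘ p` and `(p ⊗ id) ∘ l = z ∘ p`. -/
theorem stmt_12 (R : Type*) [CommRing R] (M : Type*) [AddCommGroup M] [Module R M]
    (α : M →ₗ[R] M →ₗ[R] M)
    (hcomm : ∀ m n : M, α m n = α n m)
    (hassoc : ∀ m n k : M, α (α m n) k = α m (α n k))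
    (ν : M →ₗ[R] (M ⊗[R] M))
    (hαν : (TensorProduct.lift α) ∘ₗ ν = LinearMap.id)
    (hνα : ν ∘ₗ (TensorProduct.lift α) = LinearMap.id)
    (l : (R × M) →ₗ[R] ((R × M) ⊗[R] (R × M)))
    (hl : ∀ (a : R) (x : M),
      l (a, x) = a • (((1 : R), (0 : M)) ⊗ₜ[R] ((1 : R), (0 : M))) +
        TensorProduct.map (LinearMap.inr R R M) (LinearMap.inr R R M) (ν x)) :
    let p : (R × M) →ₗ[R] R := LinearMap.fst R R M
    let z : R →ₗ[R] (R × M) := LinearMap.inl R R M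
    let P1 : ((R × M) ⊗[R] (R × M)) →ₗ[R] (R × M) :=
      (TensorProduct.rid R (R × M)).toLinearMap ∘ₗ LinearMap.lTensor (R × M) p
    let P2 : ((R × M) ⊗[R] (R × M)) →ₗ[R] (R × M) :=
      (TensorProduct.lid R (R × M)).toLinearMap ∘ₗ LinearMap.rTensor (R × M) p
    P1 ∘ₗ l = z ∘ₗ p ∧ P2 ∘ₗ l = z ∘ₗ p := by
  intro p z P1 P2
  have h1 : ∀ t : M ⊗[R] M,
      P1 (TensorProduct.map (LinearMap.inr R R M) (LinearMap.inr R R M) t) = 0 := by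
    intro t
    induction t using TensorProduct.induction_on with
    | zero => simp
    | tmul m n => simp [P1, p]
    | add x y hx hy => simp [map_add, hx, hy]
  have h2 : ∀ t : M ⊗[R] M,
      P2 (TensorProduct.map (LinearMap.inr R R M) (LinearMap.inr R R M) t) = 0 := by
    intro t
    induction t using TensorProduct.induction_on with
    | zero => simp
    | tmul m n => simp [P2, p]
    | add x y hx hy => simp [map_add, hx, hy]
  constructor <;>
  · apply LinearMap.ext
    rintro ⟨a, x⟩
    simp only [LinearMap.comp_apply, hl, map_add, map_smul, h1, h2, add_zero]
    simp [P1, P2, p, z]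
end
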